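/- Let (X, ⪯) be a prefix order with the Alexandroff topology, and let μ be a locally finite, Scott-continuous valuation on the open (i.e., upward-closed) subsets of X. Define μ̃ on the Scott-open subsets V of X∞ by μ̃(V) = μ(V ∩ X) (where V ∩ X is Alexandroff-open in X). Then μ̃ is a Scott-continuous valuation on the Scott topology of X∞; and if X is simple, then μ̃ is locally finite. -/

import Mathlib

open scoped Classical ENNReal

namespace PaperBB

/-! ## Paths -/

/-- Words over the alphabet `A_τ = A ∪ {τ}`; `none` plays the role of the silent action `τ`. -/
abbrev Word (A : Type*) := List (Option A)

/-- A path on `X`: a function whose codomain is `X` and whose domain is the set of all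
prefixes of some word `σ ∈ A_τ*`. -/
structure Path (A : Type*) (X : Type*) where
  word : Word A
  fn : {σ : Word A // σ <+: word} → X

namespace Path

variable {A X Y : Type*}

theorem prefixSnoc (σ : Word A) (a : Option A) : σ <+: σ ++ [a] := ⟨[a], rfl⟩

theorem nilPrefix (w : Word A) : ([] : Word A) <+: w := ⟨w, rfl⟩

/-- The value `p(ε)` of a path at the empty word. -/
def start (p : Path A X) : X := p.fn ⟨[], nilPrefix _⟩

/-- The trace of a path: the maximal word in its domain. -/
def trace (p : Path A X) : Word A := p.word

/-- The last state reached by a path: `last p = p (trace p)`. -/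
def last (p : Path A X) : X := p.fn ⟨p.word, List.prefix_refl _⟩

/-- `Path(f)(p) = f ∘ p`. -/
def map (f : X → Y) (p : Path A X) : Path A Y := ⟨p.word, fun σ => f (p.fn σ)⟩

/-- The prefix order on paths: `p ⪯ q` iff `dom p ⊆ dom q` and `q` agrees with `p` on `dom p`. -/
def le (p q : Path A X) : Prop :=
  ∃ h : p.word <+: q.word, ∀ (σ : Word A) (hσ : σ <+: p.word),
    q.fn ⟨σ, hσ.trans h⟩ = p.fn ⟨σ, hσ⟩

/-- The strict prefix order on paths. -/
def lt (p q : Path A X) : Prop := p.le q ∧ p ≠ q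

/-- `φ` is a stutter basis for the path `p`. -/
def IsStutterBasis (p : Path A X) (φ : {σ : Word A // σ <+: p.word} → Word A) : Prop :=
  φ ⟨[], nilPrefix _⟩ = [] ∧
  (∀ (σ : Word A) (h : σ ++ [(none : Option A)] <+: p.word),
      (p.fn ⟨σ ++ [none], h⟩ = p.fn ⟨σ, (prefixSnoc σ none).trans h⟩ →
        φ ⟨σ ++ [none], h⟩ = φ ⟨σ, (prefixSnoc σ none).trans h⟩) ∧
      (p.fn ⟨σ ++ [none], h⟩ ≠ p.fn ⟨σ, (prefixSnoc σ none).trans h⟩ →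
        φ ⟨σ ++ [none], h⟩ = φ ⟨σ, (prefixSnoc σ none).trans h⟩ ++ [none])) ∧
  (∀ (σ : Word A) (a : A) (h : σ ++ [some a] <+: p.word),
      φ ⟨σ ++ [some a], h⟩ = φ ⟨σ, (prefixSnoc σ (some a)).trans h⟩ ++ [some a])

/-- Auxiliary recursion computing the stutter basis of `p` on the prefix of length `n`. -/
noncomputable def stutterWordAux (p : Path A X) : ℕ → Word A
  | 0 => []
  | n + 1 =>
    if h : n < p.word.length then
      if (p.word.get ⟨n, h⟩) = none ∧
          p.fn ⟨p.word.take (n + 1), List.take_prefix _ _⟩ =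
            p.fn ⟨p.word.take n, List.take_prefix _ _⟩ then
        stutterWordAux p n
      else stutterWordAux p n ++ [p.word.get ⟨n, h⟩]
    else []

/-- The (unique) stutter basis of a path `p`. -/
noncomputable def stutterBasis (p : Path A X) (σ : {σ : Word A // σ <+: p.word}) : Word A :=
  stutterWordAux p σ.1.length

/-- The stutter invariant path `♮p` relative to `p`: its domain is the image of the stutter
basis `φ` and it satisfies `♮p ∘ φ = p`. -/
noncomputable def stutter (p : Path A X) : Path A X where
  word := stutterBasis p ⟨p.word, List.prefix_refl _⟩
  fn := fun w =>
    haveI : Nonempty {σ : Word A // σ <+: p.word} := ⟨⟨[], nilPrefix _⟩⟩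
    p.fn (Function.invFun (stutterBasis p) w.1)

end Path

/-- Stutter equivalence of paths: `p ∼ q` iff `♮p = ♮q`. -/
def StutterEquiv {A X : Type*} (p q : Path A X) : Prop := p.stutter = q.stutter

instance pathSetoid (A X : Type*) : Setoid (Path A X) :=
  ⟨StutterEquiv, ⟨fun _ => rfl, Eq.symm, Eq.trans⟩⟩

/-- The set `Path_∼(X)` of paths up to stutter equivalence. -/
abbrev PathQuot (A X : Type*) := Quotient (pathSetoid A X)

/-- The quotient map `π : Path(X) → Path_∼(X)`. -/
def PathQuot.mk {A X : Type*} (p : Path A X) : PathQuot A X := Quotient.mk _ p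

/-- `Path_∼(f)[p] = [f ∘ p]`. -/
noncomputable def PathQuot.map {A X Y : Type*} (f : X → Y) (c : PathQuot A X) : PathQuot A Y :=
  PathQuot.mk (Path.map f c.out)

/-- The order on `Path_∼(X)`: `[p] ⪯ [q]` iff `♮p ⪯ ♮q`. -/
def PathQuot.le {A X : Type*} (c d : PathQuot A X) : Prop :=
  ∃ p q : Path A X, PathQuot.mk p = c ∧ PathQuot.mk q = d ∧ p.stutter.le q.stutter

/-- The set of words of the shape `τ*aτ*`. -/
def TauStarATauStar {A : Type*} (a : A) (w : Word A) : Prop :=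
  ∃ n m : ℕ, w = List.replicate n none ++ some a :: List.replicate m none

/-! ## Prefix orders, the sobrification `X∞`, Scott topology, valuations -/

section OrderTheory

variable {Z : Type*}

/-- Downward-closed subsets: the closed sets of the Alexandroff topology. -/
def IsDownClosed [Preorder Z] (C : Set Z) : Prop :=
  ∀ ⦃x⦄, x ∈ C → ∀ ⦃y⦄, y ≤ x → y ∈ C

/-- Irreducible closed subsets of the Alexandroff topology. -/
def IsIrredClosed [Preorder Z] (C : Set Z) : Prop :=
  IsDownClosed C ∧ C.Nonempty ∧
    ∀ C₁ C₂ : Set Z, IsDownClosed C₁ → IsDownClosed C₂ → C = C₁ ∪ C₂ → C = C₁ ∨ C = C₂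

/-- A set is non-sober if it is irreducible and closed (w.r.t. the Alexandroff topology) but is
not the closure (the principal ideal) of any single point. -/
def NonSober [Preorder Z] (C : Set Z) : Prop :=
  IsIrredClosed C ∧ ¬ ∃ x : Z, C = {y | y ≤ x}

/-- `X∞`: `X` together with a fresh limit point `∞_C` for every non-sober `C ⊆ X`. -/
def Extended (Z : Type*) [Preorder Z] := Z ⊕ {C : Set Z // NonSober C}

/-- The order `⪯'` on `X∞` extending `⪯` by `∞_C ⪯' ∞_C` and `x ⪯' ∞_C` for `x ∈ C`. -/
def extLE [Preorder Z] : Extended Z → Extended Z → Prop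
  | Sum.inl x, Sum.inl y => x ≤ y
  | Sum.inl x, Sum.inr C => x ∈ C.1
  | Sum.inr _, Sum.inl _ => False
  | Sum.inr C, Sum.inr D => C = D

instance [PartialOrder Z] : PartialOrder (Extended Z) where
  le := extLE
  le_refl a := by
    cases a with
    | inl x => exact le_refl x
    | inr C => exact rfl
  le_trans a b c hab hbc := by
    cases a with
    | inl x =>
      cases b with
      | inl y =>
        cases c with
        | inl z => exact le_trans hab hbc
        | inr C => exact C.2.1.1 hbc hab
      | inr C =>
        cases c with
        | inl z => exact False.elim hbc
        | inr D => exact (show C = D from hbc) ▸ hab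
    | inr C =>
      cases b with
      | inl y => exact False.elim hab
      | inr D =>
        cases c with
        | inl z => exact False.elim hbc
        | inr E => exact (show C = D from hab).trans (show D = E from hbc)
  le_antisymm a b hab hba := by
    cases a with
    | inl x =>
      cases b with
      | inl y => exact congrArg Sum.inl (le_antisymm hab hba)
      | inr C => exact False.elim hba
    | inr C =>
      cases b with
      | inl y => exact False.elim hab
      | inr D => exact congrArg Sum.inr hab

/-- Scott-open subsets: upward closed and inaccessible by directed joins. -/
def ScottOpen {W : Type*} [Preorder W] (U : Set W) : Prop :=
  (∀ ⦃x y⦄, x ∈ U → x ≤ y → y ∈ U) ∧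
  ∀ D : Set W, D.Nonempty → DirectedOn (· ≤ ·) D → ∀ s : W, IsLUB D s → s ∈ U →
    (D ∩ U).Nonempty

/-- Scott-closed subsets. -/
def ScottClosed {W : Type*} [Preorder W] (C : Set W) : Prop := ScottOpen Cᶜ

end OrderTheory

section Valuation

variable {W : Type*}

/-- A valuation on a collection `Op` of open sets: strict, monotone and modular. -/
def IsValuationOn (Op : Set (Set W)) (μ : Set W → ℝ≥0∞) : Prop :=
  μ ∅ = 0 ∧
  (∀ U ∈ Op, ∀ V ∈ Op, U ⊆ V → μ U ≤ μ V) ∧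
  (∀ U ∈ Op, ∀ V ∈ Op, μ U + μ V = μ (U ∪ V) + μ (U ∩ V))

/-- Scott continuity of a valuation: it commutes with unions of directed families of opens. -/
def IsScottContinuousOn (Op : Set (Set W)) (μ : Set W → ℝ≥0∞) : Prop :=
  ∀ 𝒟 : Set (Set W), 𝒟.Nonempty → (∀ U ∈ 𝒟, U ∈ Op) → DirectedOn (· ⊆ ·) 𝒟 →
    μ (⋃₀ 𝒟) = ⨆ U ∈ 𝒟, μ U

/-- Local finiteness: every point has a finitely valued open neighbourhood. -/
def IsLocallyFiniteOn (Op : Set (Set W)) (μ : Set W → ℝ≥0∞) : Prop :=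
  ∀ x : W, ∃ U ∈ Op, x ∈ U ∧ μ U < ⊤

/-- The open sets of the Alexandroff topology of a preorder: the upward-closed sets. -/
def UpClosedSets (W : Type*) [Preorder W] : Set (Set W) :=
  {U | ∀ ⦃x y⦄, x ∈ U → x ≤ y → y ∈ U}

/-- The Scott-open subsets of a preorder. -/
def ScottOpens (W : Type*) [Preorder W] : Set (Set W) := {U | ScottOpen U}

end Valuation

/-- The separation closure `U* = {x ∈ U | cl {x} ∩ U = {x}}` of a subset of a
topological space. -/
def sepClosure {W : Type*} [TopologicalSpace W] (U : Set W) : Set W :=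
  {x ∈ U | closure {x} ∩ U = {x}}

/-! ## Fully probabilistic transition systems -/

section Prob

variable {A X : Type*}

/-- A fully probabilistic transition system. -/
structure FPTS (A X : Type*) where
  P : X → Option A → X → ℝ≥0∞
  le_one : ∀ x a y, P x a y ≤ 1
  finite_support : ∀ x : X, {q : Option A × X | 0 < P x q.1 q.2}.Finite
  total : ∀ x : X,
    (∑' q : Option A × X, P x q.1 q.2) = 0 ∨ (∑' q : Option A × X, P x q.1 q.2) = 1

/-- `p` is an execution from `x`. -/
def IsExec (S : FPTS A X) (x : X) (p : Path A X) : Prop :=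
  p.start = x ∧
  ∀ (σ : Word A) (a : Option A) (h : σ ++ [a] <+: p.word),
    0 < S.P (p.fn ⟨σ, (Path.prefixSnoc σ a).trans h⟩) a (p.fn ⟨σ ++ [a], h⟩)

/-- The weight function `μ_P` on paths: the product of the transition probabilities along an
execution, and `0` on paths that are not executions. -/
noncomputable def pathWeight (S : FPTS A X) (p : Path A X) : ℝ≥0∞ :=
  if ∃ x : X, IsExec S x p then
    ∏ i : Fin p.word.length,
      S.P (p.fn ⟨p.word.take i.1, List.take_prefix _ _⟩)
          (p.word.get i)
          (p.fn ⟨p.word.take (i.1 + 1), List.take_prefix _ _⟩)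
  else 0

/-- `x →_L Y`: executions from `x` with trace in `L`, last state in `Y`, and no strict prefix
witnessing the same. -/
def stepSet (S : FPTS A X) (x : X) (L : Set (Word A)) (Y : Set X) : Set (Path A X) :=
  {p | IsExec S x p ∧ p.trace ∈ L ∧ p.last ∈ Y ∧
       ∀ q : Path A X, q.lt p → q.trace ∈ L → q.last ∉ Y}

/-- `x ⇒_L Y`: paths starting in `x` with trace in `L` and last state in `Y`. -/
def reachSet (x : X) (L : Set (Word A)) (Y : Set X) : Set (Path A X) :=
  {p | p.start = x ∧ p.trace ∈ L ∧ p.last ∈ Y}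

/-- The separation closure `U*` of a set of paths (w.r.t. the prefix order). -/
def sepMin (U : Set (Path A X)) : Set (Path A X) :=
  {p ∈ U | ∀ q ∈ U, q.le p → q = p}

/-- The upward-closed sets of paths: the opens of the Alexandroff topology on `Path(X)`. -/
def pathUpSets (A X : Type*) : Set (Set (Path A X)) :=
  {U | ∀ p ∈ U, ∀ q : Path A X, p.le q → q ∈ U}

end Prob

/-! ## Labelled transition systems -/

section LTS

variable {A X : Type}

/-- `p` is an execution of the labelled transition system `Tr` from `x`. -/
def IsExecLTS (Tr : X → Option A → X → Prop) (x : X) (p : Path A X) : Prop :=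
  p.start = x ∧
  ∀ (σ : Word A) (a : Option A) (h : σ ++ [a] <+: p.word),
    Tr (p.fn ⟨σ, (Path.prefixSnoc σ a).trans h⟩) a (p.fn ⟨σ ++ [a], h⟩)

/-- Branching bisimulation. -/
def IsBranchingBisim (Tr : X → Option A → X → Prop) (R : X → X → Prop) : Prop :=
  Symmetric R ∧
  ∀ (x x' y : X) (a : Option A), Tr x a x' → R x y →
    (a = none ∧ R x' y) ∨
    ∃ y' y'' : X, Relation.ReflTransGen (fun u v => Tr u none v) y y' ∧
      Tr y' a y'' ∧ R x y' ∧ R x' y''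

/-- Two states are branching bisimilar if some branching bisimulation relates them. -/
def BranchingBisimilar (Tr : X → Option A → X → Prop) (x x' : X) : Prop :=
  ∃ R : X → X → Prop, IsBranchingBisim Tr R ∧ R x x'

/-- The path-based coalgebra `α : X → P(Path_∼ X)` of a labelled transition system: the
stutter classes of executions from `x` with trace in `τ*a` (for some `a ∈ A`) or in `τ*`. -/
def ltsAlpha (Tr : X → Option A → X → Prop) (x : X) : Set (PathQuot A X) :=
  {c | ∃ p : Path A X, IsExecLTS Tr x p ∧
    ((∃ (a : A) (n : ℕ), p.word = List.replicate n none ++ [some a]) ∨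
     (∃ n : ℕ, p.word = List.replicate n (none : Option A))) ∧
    c = PathQuot.mk p}

end LTS

/-- In a simple prefix order, the upper set of `Sum.inl x` is Scott open in `Extended Z`. -/
theorem scottOpen_upInl {Z : Type*} [PartialOrder Z]
    (hpre : ∀ x y z : Z, y ≤ x → z ≤ x → y ≤ z ∨ z ≤ y)
    (hfin : ∀ x : Z, {y : Z | y ≤ x}.Finite) (x : Z) :
    ScottOpen {w : Extended Z | extLE (Sum.inl x) w} := by
  constructor
  · intro a b ha hab; exact le_trans ha hab
  · intro D hDne hdir s hs hsV
    cases s with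
    | inl y =>
      have hxy : x ≤ y := hsV
      have hinl : ∀ d ∈ D, ∃ z : Z, d = Sum.inl z ∧ z ≤ y := by
        intro d hd
        cases d with
        | inl z => exact ⟨z, rfl, hs.1 hd⟩
        | inr E => exact absurd (hs.1 hd) (fun h => h)
      have hsub : {z : Z | Sum.inl z ∈ D} ⊆ {z | z ≤ y} := fun z hz => hs.1 hz
      have hfinD : {z : Z | Sum.inl z ∈ D}.Finite := (hfin y).subset hsub
      have hne : {z : Z | Sum.inl z ∈ D}.Nonempty := by
        obtain ⟨d, hd⟩ := hDne
        obtain ⟨z, rfl, _⟩ := hinl d hd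
        exact ⟨z, hd⟩
      obtain ⟨m, hmD, hmax⟩ : ∃ m ∈ {z : Z | Sum.inl z ∈ D}, ∀ z ∈ {z : Z | Sum.inl z ∈ D}, m ≤ z → m = z := by
        obtain ⟨m, hm⟩ := hfinD.exists_maximal hne
        exact ⟨m, hm.1, fun z hz h => le_antisymm h (hm.2 hz h)⟩
      have hub : ∀ z ∈ {z : Z | Sum.inl z ∈ D}, z ≤ m := by
        intro z hz
        rcases hpre y m z (hsub hmD) (hsub hz) with h | h
        · exact (hmax z hz h).ge
        · exact h
      have hubD : Sum.inl m ∈ upperBounds D := by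
        intro d hd
        obtain ⟨z, rfl, _⟩ := hinl d hd
        exact hub z hd
      have hym : y ≤ m := hs.2 hubD
      have hmy : m = y := le_antisymm (hsub hmD) hym
      exact ⟨Sum.inl y, hmy ▸ hmD, hxy⟩
    | inr C =>
      have hxC : x ∈ C.1 := hsV
      by_cases hCD : Sum.inr C ∈ D
      · exact ⟨Sum.inr C, hCD, hxC⟩
      · have hinl : ∀ d ∈ D, ∃ z : Z, d = Sum.inl z := by
          intro d hd
          cases d with
          | inl z => exact ⟨z, rfl⟩
          | inr E =>
            have hEC : E = C := hs.1 hd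
            exact absurd (hEC ▸ hd) hCD
        have hne0 : {z : Z | Sum.inl z ∈ D}.Nonempty := by
          obtain ⟨d, hd⟩ := hDne
          obtain ⟨z, rfl⟩ := hinl d hd
          exact ⟨z, hd⟩
        have hdir0 : DirectedOn (· ≤ ·) {z : Z | Sum.inl z ∈ D} := by
          intro a ha b hb
          obtain ⟨c, hc, hac, hbc⟩ := hdir _ ha _ hb
          obtain ⟨z, rfl⟩ := hinl c hc
          exact ⟨z, hc, hac, hbc⟩
        set C' : Set Z := {z : Z | ∃ d, Sum.inl d ∈ D ∧ z ≤ d} with hC'def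
        have hsubC' : ∀ d, Sum.inl d ∈ D → d ∈ C' := fun d hd => ⟨d, hd, le_refl d⟩
        have hdown : IsDownClosed C' := by
          rintro a ⟨d, hd, had⟩ b hba
          exact ⟨d, hd, hba.trans had⟩
        have hirr : IsIrredClosed C' := by
          refine ⟨hdown, ?_, ?_⟩
          · obtain ⟨z, hz⟩ := hne0
            exact ⟨z, hsubC' z hz⟩
          · intro C₁ C₂ h₁ h₂ heq
            by_contra hcon
            push_neg at hcon
            obtain ⟨hn1, hn2⟩ := hcon
            have hs1 : C₁ ⊆ C' := heq ▸ Set.subset_union_left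
            have hs2 : C₂ ⊆ C' := heq ▸ Set.subset_union_right
            have h1' : ¬ C' ⊆ C₁ := fun h => hn1 (Set.Subset.antisymm h hs1)
            have h2' : ¬ C' ⊆ C₂ := fun h => hn2 (Set.Subset.antisymm h hs2)
            obtain ⟨a, haC', ha1⟩ := Set.not_subset.mp h1'
            obtain ⟨b, hbC', hb2⟩ := Set.not_subset.mp h2'
            obtain ⟨da, hda, hada⟩ := haC'
            obtain ⟨db, hdb, hbdb⟩ := hbC'
            obtain ⟨e, he, hdae, hdbe⟩ := hdir0 da hda db hdb
            have heC' : e ∈ C' := hsubC' e he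
            rw [heq] at heC'
            rcases heC' with h | h
            · exact ha1 (h₁ h (hada.trans hdae))
            · exact hb2 (h₂ h (hbdb.trans hdbe))
        by_cases hprin : ∃ m : Z, C' = {z | z ≤ m}
        · obtain ⟨m, hm⟩ := hprin
          have hmC' : m ∈ C' := by rw [hm]; exact le_refl m
          obtain ⟨d, hd, hmd⟩ := hmC'
          have hdm : d ≤ m := by
            have := hsubC' d hd
            rwa [hm] at this
          have hubD : Sum.inl m ∈ upperBounds D := by
            intro w hw
            obtain ⟨z, rfl⟩ := hinl w hw
            have hz : z ∈ C' := hsubC' z hw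
            rw [hm] at hz
            exact hz
          exact absurd (hs.2 hubD) (fun h => h)
        · have hns : NonSober C' := ⟨hirr, hprin⟩
          have hubD : (Sum.inr ⟨C', hns⟩ : Extended Z) ∈ upperBounds D := by
            intro w hw
            obtain ⟨z, rfl⟩ := hinl w hw
            exact hsubC' z hw
          have hle := hs.2 hubD
          have hCC' : C.1 = C' := congrArg Subtype.val (hle : C = ⟨C', hns⟩)
          have hxC' : x ∈ C' := hCC' ▸ hxC
          obtain ⟨d, hd, hxd⟩ := hxC'
          exact ⟨Sum.inl d, hd, hxd⟩

theorem stmt13 {Z : Type*} [PartialOrder Z]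
    (hpre : ∀ x y z : Z, y ≤ x → z ≤ x → y ≤ z ∨ z ≤ y)
    (μ : Set Z → ℝ≥0∞)
    (hval : IsValuationOn (UpClosedSets Z) μ)
    (hsc : IsScottContinuousOn (UpClosedSets Z) μ)
    (hlf : IsLocallyFiniteOn (UpClosedSets Z) μ) :
    IsValuationOn (ScottOpens (Extended Z)) (fun V => μ (Sum.inl ⁻¹' V)) ∧
    IsScottContinuousOn (ScottOpens (Extended Z)) (fun V => μ (Sum.inl ⁻¹' V)) ∧
    ((∀ x : Z, {y : Z | y ≤ x}.Finite) →
      IsLocallyFiniteOn (ScottOpens (Extended Z)) (fun V => μ (Sum.inl ⁻¹' V))) := by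
  have hmem : ∀ V ∈ ScottOpens (Extended Z), Sum.inl ⁻¹' V ∈ UpClosedSets Z := by
    intro V hV a b ha hab
    exact hV.1 ha hab
  refine ⟨⟨?_, ?_, ?_⟩, ?_, ?_⟩
  · exact hval.1
  · intro U hU V hV hUV
    exact hval.2.1 _ (hmem U hU) _ (hmem V hV) (Set.preimage_mono hUV)
  · intro U hU V hV
    have h := hval.2.2 _ (hmem U hU) _ (hmem V hV)
    exact h
  · intro 𝒟 hne hop hdir
    have h := hsc ((fun U => Sum.inl ⁻¹' U) '' 𝒟) (hne.image _)
      (by rintro _ ⟨U, hU, rfl⟩; exact hmem U (hop U hU))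
      (by
        rintro _ ⟨U, hU, rfl⟩ _ ⟨V, hV, rfl⟩
        obtain ⟨W, hW, hUW, hVW⟩ := hdir U hU V hV
        exact ⟨_, ⟨W, hW, rfl⟩, Set.preimage_mono hUW, Set.preimage_mono hVW⟩)
    erw [Set.sUnion_image, iSup_image] at h
    show μ (Sum.inl ⁻¹' ⋃₀ 𝒟) = ⨆ U ∈ 𝒟, μ (Sum.inl ⁻¹' U)
    erw [Set.preimage_sUnion]
    exact h
  · intro hfin w
    cases w with
    | inl z =>
      obtain ⟨U, hU, hzU, hUfin⟩ := hlf z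
      refine ⟨{w' : Extended Z | extLE (Sum.inl z) w'}, scottOpen_upInl hpre hfin z, le_refl z, ?_⟩
      have hsub : Sum.inl ⁻¹' {w' : Extended Z | extLE (Sum.inl z) w'} ⊆ U := by
        intro y hy; exact hU hzU hy
      have hup : Sum.inl ⁻¹' {w' : Extended Z | extLE (Sum.inl z) w'} ∈ UpClosedSets Z := by
        intro a b ha hab; exact le_trans ha hab
      exact lt_of_le_of_lt (hval.2.1 _ hup _ hU hsub) hUfin
    | inr C =>
      obtain ⟨z, hz⟩ := C.2.1.2.1
      obtain ⟨U, hU, hzU, hUfin⟩ := hlf z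
      refine ⟨{w' : Extended Z | extLE (Sum.inl z) w'}, scottOpen_upInl hpre hfin z, hz, ?_⟩
      have hsub : Sum.inl ⁻¹' {w' : Extended Z | extLE (Sum.inl z) w'} ⊆ U := by
        intro y hy; exact hU hzU hy
      have hup : Sum.inl ⁻¹' {w' : Extended Z | extLE (Sum.inl z) w'} ∈ UpClosedSets Z := by
        intro a b ha hab; exact le_trans ha hab
      exact lt_of_le_of_lt (hval.2.1 _ hup _ hU hsub) hUfin

end PaperBB
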